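/- In the discrete exponential family model, let C, C' > 0 be constants such that w(x) θ_*^x ≤ C and |g^{(m)}(0) θ_*^m / m!| ≤ C' (C+1)^m for all nonnegative integers x, m. If Q_1 and Q_2 are mixing distributions supported on [0, θ_*/(C+3)] whose first k moments are identical (∫ θ^j dQ_1 = ∫ θ^j dQ_2 for j = 1,…,k), then the total variation distance between the mixture pmfs satisfies TV(h_{Q_1}, h_{Q_2}) ≤ 2 (C+3)² C' ((C+2)/(C+3))^k. -/

import Mathlib

open MeasureTheory Real Set

noncomputable section

/-- The measure on a countable (here: discrete) measurable type induced by a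
probability mass function `p`. -/
def pmfMeasure {α : Type*} [MeasurableSpace α] (p : α → ℝ) : Measure α :=
  Measure.sum fun a => ENNReal.ofReal (p a) • Measure.dirac a

/-- The Wasserstein-1 distance between two measures on `ℝ`, defined through the
Kantorovich–Rubinstein dual formula as the supremum of `∫ ℓ d(μ - ν)` over all
1-Lipschitz functions `ℓ`. -/
def W1 (μ ν : Measure ℝ) : ℝ :=
  ⨆ ℓ : {f : ℝ → ℝ // LipschitzWith 1 f}, (∫ x, ℓ.1 x ∂μ - ∫ x, ℓ.1 x ∂ν)

/-- `Q` is a mixing distribution on `[0, θs]`: a Borel probability measure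
supported on `[0, θs]`. -/
def IsMixing (θs : ℝ) (Q : Measure ℝ) : Prop :=
  IsProbabilityMeasure Q ∧ Q (Set.Icc 0 θs)ᶜ = 0

/-- The normalizing function `g(θ) = (∑_x w(x) θ^x)⁻¹` of the discrete
exponential family. -/
def gfun (w : ℕ → ℝ) (θ : ℝ) : ℝ := (∑' x : ℕ, w x * θ ^ x)⁻¹

/-- The discrete exponential family pmf `f(x | θ) = g(θ) w(x) θ^x`. -/
def ffun (w : ℕ → ℝ) (x : ℕ) (θ : ℝ) : ℝ := gfun w θ * w x * θ ^ x

/-- The mixture pmf `h_Q(x) = ∫ f(x | θ) dQ(θ)`. -/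
def mixPMF (w : ℕ → ℝ) (Q : Measure ℝ) (x : ℕ) : ℝ := ∫ θ, ffun w x θ ∂Q

/-- The joint law of an i.i.d. sample of size `n` drawn from the mixture
pmf `h_Q`. -/
def dataMeasure (w : ℕ → ℝ) (Q : Measure ℝ) (n : ℕ) : Measure (Fin n → ℕ) :=
  pmfMeasure fun xs => ∏ i, mixPMF w Q (xs i)

/-- `Qhat` is a nonparametric maximum likelihood estimator: for every data set
`xs` the measure `Qhat xs` is a mixing distribution on `[0, θs]` maximizing the
log-likelihood `∑ i log h_Q(xs i)` over all mixing distributions `Q`. -/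
def IsMLE (w : ℕ → ℝ) (θs : ℝ) {n : ℕ} (Qhat : (Fin n → ℕ) → Measure ℝ) : Prop :=
  (∀ xs, IsMixing θs (Qhat xs)) ∧
  ∀ xs, ∀ Q : Measure ℝ, IsMixing θs Q →
    ∑ i, Real.log (mixPMF w Q (xs i)) ≤ ∑ i, Real.log (mixPMF w (Qhat xs) (xs i))

/-- The empirical pmf `h^obs(x) = n⁻¹ ∑_i 1{X_i = x}` of a sample `xs`. -/
def empPMF {n : ℕ} (xs : Fin n → ℕ) (x : ℕ) : ℝ :=
  (n : ℝ)⁻¹ * ∑ i, if xs i = x then (1 : ℝ) else 0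

open scoped ENNReal NNReal

set_option maxHeartbeats 1000000

/-- total variation bound under moment matching, from the
proof of Theorem 1.  Given constants `C, C' > 0` with `w(x) θs^x ≤ C` and
`|g^{(m)}(0) θs^m / m!| ≤ C' (C+1)^m`, any two mixing distributions supported
on `[0, θs/(C+3)]` whose first `k` moments agree satisfy
`TV(h_{Q₁}, h_{Q₂}) ≤ 2 (C+3)² C' ((C+2)/(C+3))^k`. -/
theorem stmt_16 (θs : ℝ) (hθs : 0 < θs)
    (w : ℕ → ℝ) (hw : ∀ x, 0 < w x)
    (hR : ∃ R, θs < R ∧ Summable fun x : ℕ => w x * R ^ x)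
    (C C' : ℝ) (hC : 0 < C) (hC' : 0 < C')
    (hwb : ∀ x : ℕ, w x * θs ^ x ≤ C)
    (hgb : ∀ m : ℕ,
      |iteratedDeriv m (gfun w) 0 * θs ^ m / (Nat.factorial m)| ≤
        C' * (C + 1) ^ m)
    (Q₁ Q₂ : Measure ℝ)
    (h₁ : IsProbabilityMeasure Q₁) (h₂ : IsProbabilityMeasure Q₂)
    (hs₁ : Q₁ (Set.Icc 0 (θs / (C + 3)))ᶜ = 0)
    (hs₂ : Q₂ (Set.Icc 0 (θs / (C + 3)))ᶜ = 0)
    (k : ℕ)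
    (hmom : ∀ j : ℕ, 1 ≤ j → j ≤ k → (∫ θ, θ ^ j ∂Q₁) = ∫ θ, θ ^ j ∂Q₂) :
    (1 / 2) * ∑' x : ℕ, |mixPMF w Q₁ x - mixPMF w Q₂ x| ≤
      2 * (C + 3) ^ 2 * C' * ((C + 2) / (C + 3)) ^ k := by

  classical
  obtain ⟨R, hθR, hRsum⟩ := hR
  have hC3 : (0:ℝ) < C + 3 := by linarith
  have hC2 : (0:ℝ) < C + 2 := by linarith
  have hC1 : (0:ℝ) < C + 1 := by linarith
  have hC3' : (C:ℝ) + 3 ≠ 0 := hC3.ne'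
  have hC2' : (C:ℝ) + 2 ≠ 0 := hC2.ne'
  have hC1' : (C:ℝ) + 1 ≠ 0 := hC1.ne'
  have hθs' : θs ≠ 0 := hθs.ne'
  set θm : ℝ := θs / (C + 3) with hθm_def
  have hθm_pos : 0 < θm := div_pos hθs hC3
  set θc : ℝ := θs / (C + 2) with hθc_def
  have hθmθc : θm < θc := by
    rw [hθm_def, hθc_def, div_lt_div_iff₀ hC3 hC2]
    nlinarith
  have hθc_pos : 0 < θc := div_pos hθs hC2
  have hθcθs : θc < θs := by
    rw [hθc_def, div_lt_iff₀ hC2]; nlinarith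
  have hRpos : 0 < R := lt_trans hθs hθR
  -- the denominator function S
  set S : ℝ → ℝ := fun θ => ∑' x : ℕ, w x * θ ^ x with hS_def
  have hgfun : gfun w = fun θ => (S θ)⁻¹ := rfl
  have hsum : ∀ θ : ℝ, |θ| ≤ θs → Summable fun x : ℕ => w x * θ ^ x := by
    intro θ hθ
    apply Summable.of_norm_bounded hRsum
    intro x
    rw [Real.norm_eq_abs, abs_mul, abs_of_pos (hw x), abs_pow]
    have h1 : |θ| ^ x ≤ R ^ x := pow_le_pow_left₀ (abs_nonneg θ) (le_trans hθ hθR.le) x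
    exact mul_le_mul_of_nonneg_left h1 (hw x).le
  have hSpos : ∀ θ : ℝ, 0 ≤ θ → θ ≤ θs → 0 < S θ := by
    intro θ h0 h1
    have hs := hsum θ (by rwa [abs_of_nonneg h0])
    have h2 : w 0 * θ ^ 0 ≤ S θ :=
      Summable.le_tsum hs 0 (fun j _ => mul_nonneg (hw j).le (pow_nonneg h0 j))
    have h3 : 0 < w 0 * θ ^ 0 := by simpa using hw 0
    exact lt_of_lt_of_le h3 h2
  -- power series of S
  set pS := FormalMultilinearSeries.ofScalars ℝ w with hpS_def
  have hpS_rad : ((θs.toNNReal : ℝ≥0) : ℝ≥0∞) ≤ pS.radius := by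
    apply pS.le_radius_of_summable_norm
    refine (hsum θs (by rw [abs_of_pos hθs])).congr fun n => ?_
    rw [hpS_def, FormalMultilinearSeries.ofScalars_norm, Real.norm_eq_abs,
      abs_of_pos (hw n), Real.coe_toNNReal _ hθs.le]
  have hpS_sum : pS.sum = S := by
    funext θ
    show (∑' n : ℕ, pS n fun _ => θ) = S θ
    exact tsum_congr fun n => by
      rw [hpS_def, FormalMultilinearSeries.ofScalars_apply_eq, smul_eq_mul]
  have hθsE : (0:ℝ≥0∞) < ((θs.toNNReal : ℝ≥0) : ℝ≥0∞) :=
    ENNReal.coe_pos.mpr (Real.toNNReal_pos.mpr hθs)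
  have hSball : HasFPowerSeriesOnBall S pS 0 ((θs.toNNReal : ℝ≥0) : ℝ≥0∞) := by
    have h := pS.hasFPowerSeriesOnBall (lt_of_lt_of_le hθsE hpS_rad)
    rw [hpS_sum] at h
    exact h.mono hθsE hpS_rad
  have hmem_ball : ∀ θ : ℝ, |θ| < θs →
      θ ∈ Metric.eball (0:ℝ) ((θs.toNNReal : ℝ≥0) : ℝ≥0∞) := by
    intro θ hθ
    rw [Metric.emetric_ball_nnreal, Metric.mem_ball, dist_zero_right, Real.norm_eq_abs,
      Real.coe_toNNReal _ hθs.le]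
    exact hθ
  have hSan : ∀ θ : ℝ, |θ| < θs → AnalyticAt ℝ S θ := fun θ hθ =>
    hSball.analyticAt_of_mem (hmem_ball θ hθ)
  -- a small interval to the left of 0 where S is nonzero
  have hS0 : S 0 = w 0 := by
    show (∑' x : ℕ, w x * (0:ℝ) ^ x) = w 0
    rw [tsum_eq_single 0 (fun b hb => by simp [zero_pow hb])]
    simp
  have hSne0 : ∀ᶠ θ in nhds (0:ℝ), S θ ≠ 0 := by
    have hc : ContinuousAt S 0 := (hSan 0 (by simpa using hθs)).continuousAt
    exact hc.eventually_ne (by rw [hS0]; exact (hw 0).ne')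
  obtain ⟨ε, hε_pos, hε⟩ := Metric.eventually_nhds_iff.mp hSne0
  set δ : ℝ := min ε θc with hδ_def
  have hδ_pos : 0 < δ := lt_min hε_pos hθc_pos
  have hδθc : δ ≤ θc := min_le_right ε θc
  have hδε : δ ≤ ε := min_le_left ε θc
  set V : Set ℝ := Ioo (-δ) θc with hV_def
  have hVabs : ∀ θ ∈ V, |θ| < θs := by
    intro θ hθ
    rw [abs_lt]
    exact ⟨by linarith [hθ.1, hδθc, hθcθs], lt_trans hθ.2 hθcθs⟩
  have hSneV : ∀ θ ∈ V, S θ ≠ 0 := by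
    intro θ hθ
    rcases le_or_gt 0 θ with h0 | h0
    · exact (hSpos θ h0 (le_of_lt (lt_trans hθ.2 hθcθs))).ne'
    · apply hε
      rw [dist_zero_right, Real.norm_eq_abs, abs_of_neg h0]
      linarith [hθ.1]
  have hgV : AnalyticOnNhd ℝ (gfun w) V := by
    intro θ hθ
    rw [hgfun]
    exact (hSan θ (hVabs θ hθ)).inv (hSneV θ hθ)
  -- the Taylor coefficients of gfun at 0
  set b : ℕ → ℝ := fun m => iteratedDeriv m (gfun w) 0 / (Nat.factorial m) with hb_def
  have hbbound : ∀ m : ℕ, |b m| ≤ C' * ((C + 1) / θs) ^ m := by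
    intro m
    have h1 : |b m| * θs ^ m = |iteratedDeriv m (gfun w) 0 * θs ^ m / (Nat.factorial m)| := by
      rw [hb_def, abs_div, abs_div, abs_mul, abs_of_pos (pow_pos hθs m), Nat.abs_cast]
      ring
    have h2 : |b m| * θs ^ m ≤ C' * (C + 1) ^ m := h1 ▸ hgb m
    rw [div_pow, ← mul_div_assoc, le_div_iff₀ (pow_pos hθs m)]
    exact h2
  have hρ : (0:ℝ) ≤ (C+1)/(C+3) := by positivity
  have hρlt : (C+1)/(C+3) < 1 := by rw [div_lt_one hC3]; linarith
  have hθmθs : θm ≤ θs := by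
    rw [hθm_def, div_le_iff₀ hC3]; nlinarith
  have hbm : ∀ m : ℕ, |b m| * θm ^ m ≤ C' * ((C+1)/(C+3)) ^ m := by
    intro m
    calc |b m| * θm ^ m ≤ (C' * ((C+1)/θs) ^ m) * θm ^ m :=
          mul_le_mul_of_nonneg_right (hbbound m) (by positivity)
      _ = C' * ((C+1)/(C+3)) ^ m := by
          rw [mul_assoc, ← mul_pow]
          congr 2
          rw [hθm_def]
          field_simp
  -- the power series with coefficients b
  set pT := FormalMultilinearSeries.ofScalars ℝ b with hpT_def
  have hθcE : (0:ℝ≥0∞) < ((θc.toNNReal : ℝ≥0) : ℝ≥0∞) :=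
    ENNReal.coe_pos.mpr (Real.toNNReal_pos.mpr hθc_pos)
  have hpT_rad : ((θc.toNNReal : ℝ≥0) : ℝ≥0∞) ≤ pT.radius := by
    apply pT.le_radius_of_summable_norm
    have hsum' : Summable fun m : ℕ => C' * ((C + 1) / (C + 2)) ^ m :=
      (summable_geometric_of_lt_one (by positivity)
        (by rw [div_lt_one hC2]; linarith)).mul_left C'
    apply Summable.of_nonneg_of_le (fun m => by positivity) _ hsum'
    intro m
    rw [hpT_def, FormalMultilinearSeries.ofScalars_norm, Real.norm_eq_abs,
      Real.coe_toNNReal _ hθc_pos.le]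
    calc |b m| * θc ^ m ≤ (C' * ((C+1)/θs) ^ m) * θc ^ m :=
          mul_le_mul_of_nonneg_right (hbbound m) (by positivity)
      _ = C' * ((C+1)/(C+2)) ^ m := by
          rw [mul_assoc, ← mul_pow]
          congr 2
          rw [hθc_def]
          field_simp
  set T : ℝ → ℝ := fun θ => ∑' m : ℕ, b m * θ ^ m with hT_def
  have hpT_sum : pT.sum = T := by
    funext θ
    show (∑' n : ℕ, pT n fun _ => θ) = T θ
    exact tsum_congr fun n => by
      rw [hpT_def, FormalMultilinearSeries.ofScalars_apply_eq, smul_eq_mul]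
  have hTball : HasFPowerSeriesOnBall T pT 0 ((θc.toNNReal : ℝ≥0) : ℝ≥0∞) := by
    have h := pT.hasFPowerSeriesOnBall (lt_of_lt_of_le hθcE hpT_rad)
    rw [hpT_sum] at h
    exact h.mono hθcE hpT_rad
  have hTan : AnalyticOnNhd ℝ T V := by
    intro θ hθ
    apply hTball.analyticAt_of_mem
    rw [Metric.emetric_ball_nnreal, Metric.mem_ball, dist_zero_right, Real.norm_eq_abs,
      Real.coe_toNNReal _ hθc_pos.le, abs_lt]
    exact ⟨by linarith [hθ.1, hδθc], hθ.2⟩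
  have h0V : (0:ℝ) ∈ V := ⟨by linarith, hθc_pos⟩
  -- gfun agrees with T near 0
  obtain ⟨p, r, hpr⟩ : ∃ p r, HasFPowerSeriesOnBall (gfun w) p 0 r := by
    obtain ⟨p, hp⟩ := hgV 0 h0V
    obtain ⟨r, hr⟩ := hp
    exact ⟨p, r, hr⟩
  have hcoeff : ∀ n : ℕ, p.coeff n = b n := by
    intro n
    have h := hpr.factorial_smul (1:ℝ) n
    rw [← iteratedDeriv_eq_iteratedFDeriv] at h
    have h2 : (Nat.factorial n : ℝ) * p.coeff n = iteratedDeriv n (gfun w) 0 := by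
      rw [← h, nsmul_eq_mul]
      rfl
    have h3 : (Nat.factorial n : ℝ) ≠ 0 := Nat.cast_ne_zero.mpr n.factorial_ne_zero
    show p.coeff n = iteratedDeriv n (gfun w) 0 / (Nat.factorial n)
    rw [← h2, mul_comm, mul_div_assoc, div_self h3, mul_one]
  have hfg : gfun w =ᶠ[nhds (0:ℝ)] T := by
    filter_upwards [EMetric.ball_mem_nhds (0:ℝ) hpr.r_pos] with θ hθ
    have h1 : gfun w (0 + θ) = ∑' n : ℕ, p n fun _ => θ := (hpr.hasSum hθ).tsum_eq.symm
    rw [zero_add] at h1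
    rw [h1]
    exact tsum_congr fun n => by
      rw [FormalMultilinearSeries.apply_eq_pow_smul_coeff, hcoeff n, smul_eq_mul]
      ring
  have hEq : EqOn (gfun w) T V :=
    hgV.eqOn_of_preconnected_of_eventuallyEq hTan (convex_Ioo _ _).isPreconnected h0V hfg
  have hIccV : Icc (0:ℝ) θm ⊆ V := fun θ hθ =>
    ⟨lt_of_lt_of_le (neg_lt_zero.mpr hδ_pos) hθ.1, lt_of_le_of_lt hθ.2 hθmθc⟩
  have hgexp : ∀ θ ∈ Icc (0:ℝ) θm, gfun w θ = ∑' m : ℕ, b m * θ ^ m := fun θ hθ =>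
    hEq (hIccV hθ)
  -- moment bounds
  have hmoment_bound : ∀ (Q : Measure ℝ), IsProbabilityMeasure Q → Q (Icc 0 θm)ᶜ = 0 →
      ∀ j : ℕ, |∫ θ, θ ^ j ∂Q| ≤ θm ^ j := by
    intro Q hQ hQs j
    have hae : ∀ᵐ θ ∂Q, θ ∈ Icc 0 θm := by
      rw [MeasureTheory.ae_iff]
      exact hQs
    have h := MeasureTheory.norm_integral_le_of_norm_le_const
      (μ := Q) (C := θm ^ j) (f := fun θ : ℝ => θ ^ j) ?_
    · rw [Real.norm_eq_abs] at h
      simpa [measure_univ] using h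
    · filter_upwards [hae] with θ hθ
      rw [Real.norm_eq_abs, abs_pow, abs_of_nonneg hθ.1]
      exact pow_le_pow_left₀ hθ.1 hθ.2 j
  -- expansion of the mixture pmf
  have hmix : ∀ (Q : Measure ℝ), IsProbabilityMeasure Q → Q (Icc 0 θm)ᶜ = 0 →
      ∀ x : ℕ, mixPMF w Q x = ∑' m : ℕ, w x * b m * ∫ θ, θ ^ (x + m) ∂Q := by
    intro Q hQ hQs x
    have hae : ∀ᵐ θ ∂Q, θ ∈ Icc 0 θm := by
      rw [MeasureTheory.ae_iff]
      exact hQs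
    have hptw : ∀ θ ∈ Icc (0:ℝ) θm, ffun w x θ = ∑' m : ℕ, w x * b m * θ ^ (x + m) := by
      intro θ hθ
      calc ffun w x θ = (∑' m : ℕ, b m * θ ^ m) * (w x * θ ^ x) := by
            rw [ffun, hgexp θ hθ]; ring
        _ = ∑' m : ℕ, (b m * θ ^ m) * (w x * θ ^ x) := tsum_mul_right.symm
        _ = ∑' m : ℕ, w x * b m * θ ^ (x + m) := tsum_congr fun m => by
            rw [pow_add]; ring
    have hcongr : mixPMF w Q x = ∫ θ, (∑' m : ℕ, w x * b m * θ ^ (x + m)) ∂Q := by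
      rw [mixPMF]
      apply MeasureTheory.integral_congr_ae
      filter_upwards [hae] with θ hθ using hptw θ hθ
    rw [hcongr, MeasureTheory.integral_tsum]
    · exact tsum_congr fun m => by rw [MeasureTheory.integral_const_mul]
    · exact fun m => (Continuous.aestronglyMeasurable
        (continuous_const.mul (continuous_pow (x + m))))
    · apply ne_of_lt
      have hbnd : ∀ m : ℕ, ∫⁻ θ, ‖w x * b m * θ ^ (x + m)‖₊ ∂Q ≤
          ENNReal.ofReal (w x * |b m| * θm ^ (x + m)) := by
        intro m
        calc ∫⁻ θ, (‖w x * b m * θ ^ (x + m)‖₊ : ℝ≥0∞) ∂Q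
            ≤ ∫⁻ _, ENNReal.ofReal (w x * |b m| * θm ^ (x + m)) ∂Q := by
              apply MeasureTheory.lintegral_mono_ae
              filter_upwards [hae] with θ hθ
              rw [← ENNReal.ofReal_coe_nnreal, coe_nnnorm]
              apply ENNReal.ofReal_le_ofReal
              rw [Real.norm_eq_abs, abs_mul, abs_mul, abs_of_pos (hw x), abs_pow,
                abs_of_nonneg hθ.1]
              have h1 : θ ^ (x + m) ≤ θm ^ (x + m) := pow_le_pow_left₀ hθ.1 hθ.2 (x + m)
              have h2 : (0:ℝ) ≤ w x * |b m| := mul_nonneg (hw x).le (abs_nonneg _)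
              exact mul_le_mul_of_nonneg_left h1 h2
          _ = ENNReal.ofReal (w x * |b m| * θm ^ (x + m)) := by
              rw [MeasureTheory.lintegral_const, measure_univ, mul_one]
      apply lt_of_le_of_lt (ENNReal.tsum_le_tsum hbnd)
      have hsum2 : Summable fun m : ℕ => w x * |b m| * θm ^ (x + m) := by
        apply Summable.of_nonneg_of_le
          (fun m => mul_nonneg (mul_nonneg (hw x).le (abs_nonneg _)) (pow_nonneg hθm_pos.le _)) _
          ((summable_geometric_of_lt_one hρ hρlt).mul_left (w x * θm ^ x * C'))
        intro m
        calc w x * |b m| * θm ^ (x + m) = (w x * θm ^ x) * (|b m| * θm ^ m) := by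
              rw [pow_add]; ring
          _ ≤ (w x * θm ^ x) * (C' * ((C+1)/(C+3)) ^ m) :=
              mul_le_mul_of_nonneg_left (hbm m)
                (mul_nonneg (hw x).le (pow_nonneg hθm_pos.le x))
          _ = w x * θm ^ x * C' * ((C+1)/(C+3)) ^ m := by ring
      rw [← ENNReal.ofReal_tsum_of_nonneg
        (fun m => mul_nonneg (mul_nonneg (hw x).le (abs_nonneg _)) (pow_nonneg hθm_pos.le _))
        hsum2]
      exact ENNReal.ofReal_lt_top
  -- per-term difference bound and moment matching
  have hμb1 : ∀ j : ℕ, |∫ θ, θ ^ j ∂Q₁| ≤ θm ^ j := hmoment_bound Q₁ h₁ hs₁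
  have hμb2 : ∀ j : ℕ, |∫ θ, θ ^ j ∂Q₂| ≤ θm ^ j := hmoment_bound Q₂ h₂ hs₂
  have hΔ0 : ∀ j : ℕ, j ≤ k → (∫ θ, θ ^ j ∂Q₁) = ∫ θ, θ ^ j ∂Q₂ := by
    intro j hj
    rcases Nat.eq_zero_or_pos j with h | h
    · subst h
      simp only [pow_zero, MeasureTheory.integral_const, smul_eq_mul, mul_one,
        measure_univ, ENNReal.toReal_one, probReal_univ]
    · exact hmom j h hj
  have hsummul : ∀ (Q : Measure ℝ), (∀ j : ℕ, |∫ θ, θ ^ j ∂Q| ≤ θm ^ j) → ∀ x : ℕ,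
      Summable fun m : ℕ => w x * b m * ∫ θ, θ ^ (x + m) ∂Q := by
    intro Q hμ x
    apply Summable.of_norm_bounded
      ((summable_geometric_of_lt_one hρ hρlt).mul_left (w x * θm ^ x * C'))
    intro m
    rw [Real.norm_eq_abs, abs_mul, abs_mul, abs_of_pos (hw x)]
    calc w x * |b m| * |∫ θ, θ ^ (x + m) ∂Q|
        ≤ w x * |b m| * θm ^ (x + m) :=
          mul_le_mul_of_nonneg_left (hμ _) (mul_nonneg (hw x).le (abs_nonneg _))
      _ = (w x * θm ^ x) * (|b m| * θm ^ m) := by rw [pow_add]; ring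
      _ ≤ (w x * θm ^ x) * (C' * ((C+1)/(C+3)) ^ m) :=
          mul_le_mul_of_nonneg_left (hbm m)
            (mul_nonneg (hw x).le (pow_nonneg hθm_pos.le x))
      _ = w x * θm ^ x * C' * ((C+1)/(C+3)) ^ m := by ring
  have hdiff : ∀ x : ℕ, mixPMF w Q₁ x - mixPMF w Q₂ x =
      ∑' m : ℕ, w x * b m * ((∫ θ, θ ^ (x + m) ∂Q₁) - ∫ θ, θ ^ (x + m) ∂Q₂) := by
    intro x
    rw [hmix Q₁ h₁ hs₁ x, hmix Q₂ h₂ hs₂ x,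
      ← Summable.tsum_sub (hsummul Q₁ hμb1 x) (hsummul Q₂ hμb2 x)]
    exact tsum_congr fun m => by ring
  -- the key coefficient bound
  set K : ℝ := 2 * C * C' * ((C+2)/(C+3)) ^ k with hK_def
  have hDb : ∀ x m : ℕ,
      |w x * b m * ((∫ θ, θ ^ (x + m) ∂Q₁) - ∫ θ, θ ^ (x + m) ∂Q₂)| ≤
        K * ((1/(C+2)) ^ x * ((C+1)/(C+2)) ^ m) := by
    intro x m
    have hK0 : 0 ≤ K := by rw [hK_def]; positivity
    rcases le_or_gt (x + m) k with h | h
    · rw [hΔ0 _ h, sub_self, mul_zero, abs_zero]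
      positivity
    · have h2 : |(∫ θ, θ ^ (x + m) ∂Q₁) - ∫ θ, θ ^ (x + m) ∂Q₂| ≤ 2 * θm ^ (x + m) := by
        calc |(∫ θ, θ ^ (x + m) ∂Q₁) - ∫ θ, θ ^ (x + m) ∂Q₂|
            ≤ |∫ θ, θ ^ (x + m) ∂Q₁| + |∫ θ, θ ^ (x + m) ∂Q₂| := abs_sub _ _
          _ ≤ θm ^ (x + m) + θm ^ (x + m) := add_le_add (hμb1 _) (hμb2 _)
          _ = 2 * θm ^ (x + m) := by ring
      have hwx : w x * θm ^ x ≤ C * (1/(C+3)) ^ x := by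
        have hid : θm ^ x = θs ^ x * (1/(C+3)) ^ x := by
          rw [← mul_pow]
          congr 1
          rw [hθm_def]; ring
        calc w x * θm ^ x = (w x * θs ^ x) * (1/(C+3)) ^ x := by rw [hid]; ring
          _ ≤ C * (1/(C+3)) ^ x :=
            mul_le_mul_of_nonneg_right (hwb x) (by positivity)
      have h1 : |w x * b m * ((∫ θ, θ ^ (x + m) ∂Q₁) - ∫ θ, θ ^ (x + m) ∂Q₂)| ≤
          2 * ((w x * θm ^ x) * (|b m| * θm ^ m)) := by
        rw [abs_mul, abs_mul, abs_of_pos (hw x)]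
        calc w x * |b m| * |(∫ θ, θ ^ (x + m) ∂Q₁) - ∫ θ, θ ^ (x + m) ∂Q₂|
            ≤ w x * |b m| * (2 * θm ^ (x + m)) :=
              mul_le_mul_of_nonneg_left h2 (mul_nonneg (hw x).le (abs_nonneg _))
          _ = 2 * ((w x * θm ^ x) * (|b m| * θm ^ m)) := by rw [pow_add]; ring
      have hid : (1/(C+3):ℝ) ^ x * ((C+1)/(C+3)) ^ m =
          ((C+2)/(C+3)) ^ (x + m) * ((1/(C+2)) ^ x * ((C+1)/(C+2)) ^ m) := by
        rw [pow_add,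
          show (1/(C+3):ℝ) = (C+2)/(C+3) * (1/(C+2)) by field_simp,
          show ((C+1)/(C+3):ℝ) = (C+2)/(C+3) * ((C+1)/(C+2)) by field_simp,
          mul_pow, mul_pow]
        ring
      have hρ'le : ((C+2)/(C+3):ℝ) ^ (x + m) ≤ ((C+2)/(C+3)) ^ k :=
        pow_le_pow_of_le_one (by positivity) (by rw [div_le_one hC3]; linarith) (le_of_lt h)
      calc |w x * b m * ((∫ θ, θ ^ (x + m) ∂Q₁) - ∫ θ, θ ^ (x + m) ∂Q₂)|
          ≤ 2 * ((w x * θm ^ x) * (|b m| * θm ^ m)) := h1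
        _ ≤ 2 * ((C * (1/(C+3)) ^ x) * (C' * ((C+1)/(C+3)) ^ m)) := by
            apply mul_le_mul_of_nonneg_left _ (by norm_num)
            exact mul_le_mul hwx (hbm m) (by positivity) (by positivity)
        _ = 2 * C * C' * (((C+2)/(C+3)) ^ (x + m) * ((1/(C+2)) ^ x * ((C+1)/(C+2)) ^ m)) := by
            rw [show (C * (1/(C+3)) ^ x) * (C' * ((C+1)/(C+3)) ^ m)
                = C * C' * ((1/(C+3)) ^ x * ((C+1)/(C+3)) ^ m) by ring, hid]
            ring
        _ ≤ 2 * C * C' * (((C+2)/(C+3)) ^ k * ((1/(C+2)) ^ x * ((C+1)/(C+2)) ^ m)) := by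
            apply mul_le_mul_of_nonneg_left _ (by positivity)
            exact mul_le_mul_of_nonneg_right hρ'le (by positivity)
        _ = K * ((1/(C+2)) ^ x * ((C+1)/(C+2)) ^ m) := by rw [hK_def]; ring
  have hK0 : 0 ≤ K := by rw [hK_def]; positivity
  -- geometric sums
  have hc0 : (0:ℝ) ≤ 1/(C+2) := by positivity
  have hc1 : (1/(C+2):ℝ) < 1 := by rw [div_lt_one hC2]; linarith
  have hd0 : (0:ℝ) ≤ (C+1)/(C+2) := by positivity
  have hd1 : ((C+1)/(C+2):ℝ) < 1 := by rw [div_lt_one hC2]; linarith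
  have hgeo_c : Summable fun x : ℕ => (1/(C+2):ℝ) ^ x := summable_geometric_of_lt_one hc0 hc1
  have hgeo_d : Summable fun m : ℕ => ((C+1)/(C+2):ℝ) ^ m := summable_geometric_of_lt_one hd0 hd1
  have hdinv : ∑' m : ℕ, ((C+1)/(C+2):ℝ) ^ m = C + 2 := by
    rw [tsum_geometric_of_lt_one hd0 hd1,
      show (1 - (C+1)/(C+2) : ℝ) = 1/(C+2) by field_simp; ring, one_div, inv_inv]
  have hcinv : ∑' x : ℕ, (1/(C+2):ℝ) ^ x = (C+2)/(C+1) := by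
    rw [tsum_geometric_of_lt_one hc0 hc1,
      show (1 - 1/(C+2) : ℝ) = (C+1)/(C+2) by field_simp; ring, inv_div]
  -- sum over m for each x
  have hxb : ∀ x : ℕ, |mixPMF w Q₁ x - mixPMF w Q₂ x| ≤ (K * (C+2)) * (1/(C+2)) ^ x := by
    intro x
    rw [hdiff x]
    have hsb : Summable fun m : ℕ => K * ((1/(C+2)) ^ x * ((C+1)/(C+2)) ^ m) := by
      refine (hgeo_d.mul_left (K * (1/(C+2)) ^ x)).congr fun m => ?_
      ring
    have hsabs : Summable fun m : ℕ =>
        |w x * b m * ((∫ θ, θ ^ (x + m) ∂Q₁) - ∫ θ, θ ^ (x + m) ∂Q₂)| :=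
      Summable.of_nonneg_of_le (fun m => abs_nonneg _) (fun m => hDb x m) hsb
    calc |∑' m : ℕ, w x * b m * ((∫ θ, θ ^ (x + m) ∂Q₁) - ∫ θ, θ ^ (x + m) ∂Q₂)|
        ≤ ∑' m : ℕ, |w x * b m * ((∫ θ, θ ^ (x + m) ∂Q₁) - ∫ θ, θ ^ (x + m) ∂Q₂)| := by
          have := norm_tsum_le_tsum_norm (f := fun m : ℕ =>
            w x * b m * ((∫ θ, θ ^ (x + m) ∂Q₁) - ∫ θ, θ ^ (x + m) ∂Q₂))
            (by simpa only [Real.norm_eq_abs] using hsabs)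
          simpa only [Real.norm_eq_abs] using this
      _ ≤ ∑' m : ℕ, K * ((1/(C+2)) ^ x * ((C+1)/(C+2)) ^ m) :=
          Summable.tsum_le_tsum (fun m => hDb x m) hsabs hsb
      _ = (K * (1/(C+2)) ^ x) * ∑' m : ℕ, ((C+1)/(C+2)) ^ m := by
          rw [← tsum_mul_left]
          exact tsum_congr fun m => by ring
      _ = (K * (C+2)) * (1/(C+2)) ^ x := by rw [hdinv]; ring
  have hsx : Summable fun x : ℕ => (K * (C+2)) * (1/(C+2):ℝ) ^ x := hgeo_c.mul_left _
  have hsax : Summable fun x : ℕ => |mixPMF w Q₁ x - mixPMF w Q₂ x| :=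
    Summable.of_nonneg_of_le (fun x => abs_nonneg _) hxb hsx
  have hfinal : ∑' x : ℕ, |mixPMF w Q₁ x - mixPMF w Q₂ x| ≤ (K * (C+2)) * ((C+2)/(C+1)) := by
    calc ∑' x : ℕ, |mixPMF w Q₁ x - mixPMF w Q₂ x|
        ≤ ∑' x : ℕ, (K * (C+2)) * (1/(C+2)) ^ x := Summable.tsum_le_tsum hxb hsax hsx
      _ = (K * (C+2)) * ∑' x : ℕ, (1/(C+2)) ^ x := tsum_mul_left
      _ = (K * (C+2)) * ((C+2)/(C+1)) := by rw [hcinv]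
  calc (1/2 : ℝ) * ∑' x : ℕ, |mixPMF w Q₁ x - mixPMF w Q₂ x|
      ≤ (1/2 : ℝ) * ((K * (C+2)) * ((C+2)/(C+1))) := by
        apply mul_le_mul_of_nonneg_left hfinal (by norm_num)
    _ = (C * (C+2) ^ 2 / (C+1)) * (C' * ((C+2)/(C+3)) ^ k) := by rw [hK_def]; ring
    _ ≤ (2 * (C+3) ^ 2) * (C' * ((C+2)/(C+3)) ^ k) := by
        apply mul_le_mul_of_nonneg_right _ (by positivity)
        rw [div_le_iff₀ hC1]
        nlinarith
    _ = 2 * (C + 3) ^ 2 * C' * ((C + 2) / (C + 3)) ^ k := by ring
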